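/- Let q : ℝ → ℝ be a measurable function with q ≥ 0 and ∫_ℝ q(s) ds = 1, such that s ↦ s·q(s) is integrable, with mean s₀ := ∫_ℝ s·q(s) ds, and assume ∫_ℝ (s − s₀)²·q(s) ds < ∞. Define z(K) := ∫_ℝ max(s − K, 0)·q(s) ds − max(s₀ − K, 0) and Ψ(v) := ∫_ℝ e^{iv(s − s₀)}·q(s) ds. Then for every v ∈ ℝ with v ≠ 0, ∫_ℝ e^{ivK}·z(K) dK = e^{iv s₀}·(1 − Ψ(v))/v². -/

import Mathlib

open MeasureTheory Set


noncomputable def ctvPsi (s₀ s K : ℝ) : ℝ :=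
  max (s - K) 0 - max (s₀ - K) 0 - if K < s₀ then s - s₀ else 0

lemma ctvPsi_eq (s₀ s K : ℝ) :
    ctvPsi s₀ s K = if s₀ ≤ s then (Ico s₀ s).indicator (fun K => s - K) K
      else (Ico s s₀).indicator (fun K => K - s) K := by
  unfold ctvPsi
  rcases le_or_gt s₀ s with h | h
  · rw [if_pos h]
    rcases lt_or_ge K s₀ with h1 | h1
    · rw [if_pos h1, Set.indicator_of_notMem (by simp [mem_Ico, not_le.2 h1]),
        max_eq_left (by linarith), max_eq_left (by linarith)]
      ring
    · rw [if_neg (not_lt.2 h1)]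
      rcases lt_or_ge K s with h2 | h2
      · rw [Set.indicator_of_mem (mem_Ico.2 ⟨h1, h2⟩), max_eq_left (by linarith : (0:ℝ) ≤ s - K), max_eq_right (by linarith : s₀ - K ≤ (0:ℝ))]
        ring
      · rw [Set.indicator_of_notMem (by simp [mem_Ico, not_lt.2 h2]),
          max_eq_right (by linarith : s - K ≤ (0:ℝ)), max_eq_right (by linarith : s₀ - K ≤ (0:ℝ))]
        ring
  · rw [if_neg (not_le.2 h)]
    rcases lt_or_ge K s with h1 | h1
    · rw [if_pos (by linarith), Set.indicator_of_notMem (by simp [mem_Ico, not_le.2 h1]),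
        max_eq_left (by linarith), max_eq_left (by linarith)]
      ring
    · rcases lt_or_ge K s₀ with h2 | h2
      · rw [if_pos h2, Set.indicator_of_mem (mem_Ico.2 ⟨h1, h2⟩), max_eq_right (by linarith : s - K ≤ (0:ℝ)), max_eq_left (by linarith : (0:ℝ) ≤ s₀ - K)]
        ring
      · rw [if_neg (not_lt.2 h2), Set.indicator_of_notMem (by simp [mem_Ico, not_lt.2 h2]),
          max_eq_right (by linarith : s - K ≤ (0:ℝ)), max_eq_right (by linarith : s₀ - K ≤ (0:ℝ))]
        ring

lemma ctvPsi_nonneg (s₀ s K : ℝ) : 0 ≤ ctvPsi s₀ s K := by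
  rw [ctvPsi_eq]
  split_ifs with h
  · exact Set.indicator_nonneg (fun x hx => by simp only [mem_Ico] at hx; linarith) K
  · exact Set.indicator_nonneg (fun x hx => by simp only [mem_Ico] at hx; linarith) K

lemma ctv_hasDerivAt (c : ℂ) (hc : c ≠ 0) (s : ℝ) (K : ℝ) :
    HasDerivAt (fun x : ℝ => Complex.exp (c * x) * (((s : ℂ) - x) / c + 1 / c ^ 2))
      (Complex.exp (c * K) * ((s : ℂ) - K)) K := by
  have h1 : HasDerivAt (fun x : ℝ => Complex.exp (c * x)) (c * Complex.exp (c * K)) K := by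
    have := ((Complex.hasDerivAt_exp (c * K)).comp (K : ℂ)
      ((hasDerivAt_id (K : ℂ)).const_mul c)).comp_ofReal
    simpa [mul_comm] using this
  have h2 : HasDerivAt (fun x : ℝ => ((s : ℂ) - x) / c + 1 / c ^ 2) (-(1 / c)) K := by
    have : HasDerivAt (fun z : ℂ => ((s : ℂ) - z) / c + 1 / c ^ 2) (-(1 / c)) (K : ℂ) := by
      have := (((hasDerivAt_id ((K:ℝ) : ℂ)).const_sub (s : ℂ)).div_const c).add_const
        (1 / c ^ 2)
      exact this.congr_deriv (by ring)
    exact this.comp_ofReal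
  have := h1.mul h2
  refine this.congr_deriv ?_
  field_simp
  ring

lemma ctv_interval_integral (c : ℂ) (hc : c ≠ 0) (s a : ℝ) :
    (∫ K in a..s, Complex.exp (c * K) * ((s : ℂ) - K)) =
      Complex.exp (c * s) / c ^ 2 -
        Complex.exp (c * a) * (((s : ℂ) - a) / c + 1 / c ^ 2) := by
  have h := intervalIntegral.integral_eq_sub_of_hasDerivAt
    (f := fun x : ℝ => Complex.exp (c * x) * (((s : ℂ) - x) / c + 1 / c ^ 2))
    (fun K _ => ctv_hasDerivAt c hc s K)
    (Continuous.intervalIntegrable (by continuity) a s)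
  rw [h]
  simp
  ring

lemma ctv_integral_psi (c : ℂ) (hc : c ≠ 0) (s₀ s : ℝ) :
    (∫ K : ℝ, Complex.exp (c * K) * ((ctvPsi s₀ s K : ℝ) : ℂ)) =
      Complex.exp (c * s) / c ^ 2 -
        Complex.exp (c * s₀) * (((s : ℂ) - s₀) / c + 1 / c ^ 2) := by
  rcases le_or_gt s₀ s with h | h
  · have heq : ∀ K : ℝ, Complex.exp (c * K) * ((ctvPsi s₀ s K : ℝ) : ℂ) =
        Set.indicator (Set.Ico s₀ s) (fun K : ℝ => Complex.exp (c * K) * ((s : ℂ) - K)) K := by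
      intro K
      rw [ctvPsi_eq, if_pos h]
      by_cases hK : K ∈ Set.Ico s₀ s
      · simp only [Set.indicator_of_mem hK]
        push_cast
        ring
      · simp [Set.indicator_of_notMem hK]
    simp_rw [heq]
    rw [MeasureTheory.integral_indicator measurableSet_Ico,
      MeasureTheory.Measure.restrict_congr_set Ico_ae_eq_Ioc,
      ← intervalIntegral.integral_of_le h, ctv_interval_integral c hc]
  · have heq : ∀ K : ℝ, Complex.exp (c * K) * ((ctvPsi s₀ s K : ℝ) : ℂ) =
        Set.indicator (Set.Ico s s₀) (fun K : ℝ => Complex.exp (c * K) * ((K : ℂ) - s)) K := by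
      intro K
      rw [ctvPsi_eq, if_neg (not_le.2 h)]
      by_cases hK : K ∈ Set.Ico s s₀
      · simp only [Set.indicator_of_mem hK]
        push_cast
        ring
      · simp [Set.indicator_of_notMem hK]
    simp_rw [heq]
    rw [MeasureTheory.integral_indicator measurableSet_Ico,
      MeasureTheory.Measure.restrict_congr_set Ico_ae_eq_Ioc,
      ← intervalIntegral.integral_of_le h.le]
    have : (∫ K in s..s₀, Complex.exp (c * K) * ((K : ℂ) - s)) =
        - ∫ K in s..s₀, Complex.exp (c * K) * ((s : ℂ) - K) := by
      rw [← intervalIntegral.integral_neg]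
      congr 1
      funext K
      ring
    rw [this, ← intervalIntegral.integral_symm, ctv_interval_integral c hc]

lemma ctv_integral_psi_real (s₀ s : ℝ) :
    (∫ K : ℝ, ctvPsi s₀ s K) = (s - s₀) ^ 2 / 2 := by
  rcases le_or_gt s₀ s with h | h
  · have heq : ∀ K : ℝ, ctvPsi s₀ s K =
        Set.indicator (Set.Ico s₀ s) (fun K : ℝ => s - K) K := by
      intro K; rw [ctvPsi_eq, if_pos h]
    simp_rw [heq]
    rw [MeasureTheory.integral_indicator measurableSet_Ico,
      MeasureTheory.Measure.restrict_congr_set Ico_ae_eq_Ioc,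
      ← intervalIntegral.integral_of_le h]
    simp [intervalIntegral.integral_sub intervalIntegrable_const intervalIntegral.intervalIntegrable_id,
      integral_id]
    ring
  · have heq : ∀ K : ℝ, ctvPsi s₀ s K =
        Set.indicator (Set.Ico s s₀) (fun K : ℝ => K - s) K := by
      intro K; rw [ctvPsi_eq, if_neg (not_le.2 h)]
    simp_rw [heq]
    rw [MeasureTheory.integral_indicator measurableSet_Ico,
      MeasureTheory.Measure.restrict_congr_set Ico_ae_eq_Ioc,
      ← intervalIntegral.integral_of_le h.le]
    simp [intervalIntegral.integral_sub intervalIntegral.intervalIntegrable_id intervalIntegrable_const,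
      integral_id]
    ring

open MeasureTheory Set

theorem fourier_transform_modified_time_value
    (q : ℝ → ℝ) (hq_meas : Measurable q) (hq_nonneg : ∀ s, 0 ≤ q s)
    (hq_prob : ∫ s, q s = 1)
    (hq_mean : Integrable (fun s => s * q s))
    (s₀ : ℝ) (hs₀ : s₀ = ∫ s, s * q s)
    (hvar : Integrable (fun s => (s - s₀) ^ 2 * q s))
    (z : ℝ → ℝ)
    (hz : ∀ K, z K = (∫ s, max (s - K) 0 * q s) - max (s₀ - K) 0)
    (Ψ : ℝ → ℂ)
    (hΨ : ∀ v : ℝ, Ψ v = ∫ s : ℝ, Complex.exp (Complex.I * (v : ℂ) * ((s : ℂ) - (s₀ : ℂ))) * ((q s : ℝ) : ℂ))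
    (v : ℝ) (hv : v ≠ 0) :
    ∫ K : ℝ, Complex.exp (Complex.I * (v : ℂ) * (K : ℂ)) * ((z K : ℝ) : ℂ) =
      Complex.exp (Complex.I * (v : ℂ) * (s₀ : ℂ)) * (1 - Ψ v) / (v : ℂ) ^ 2 := by
  have hv' : (v : ℂ) ≠ 0 := Complex.ofReal_ne_zero.2 hv
  set c : ℂ := Complex.I * (v : ℂ) with hc_def
  have hc : c ≠ 0 := mul_ne_zero Complex.I_ne_zero hv'
  have hc2 : c ^ 2 = -(v : ℂ) ^ 2 := by
    rw [hc_def, mul_pow, Complex.I_sq]; ring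
  -- basic integrability
  have hq_int : Integrable q := by
    by_contra h
    rw [integral_undef h] at hq_prob
    norm_num at hq_prob
  have hsub : Integrable (fun s => (s - s₀) * q s) := by
    have := hq_mean.sub (hq_int.const_mul s₀)
    refine this.congr (Filter.Eventually.of_forall fun s => ?_)
    simp only [Pi.sub_apply]
    ring
  have hmean0 : (∫ s, (s - s₀) * q s) = 0 := by
    have heq : (fun s => (s - s₀) * q s) = fun s => s * q s - s₀ * q s := by
      funext s; ring
    rw [heq, integral_sub hq_mean (hq_int.const_mul s₀), integral_const_mul, hq_prob, ← hs₀]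
    ring
  have habs : Integrable (fun s => |s| * q s) := by
    refine hq_mean.abs.congr (Filter.Eventually.of_forall fun s => ?_)
    show |s * q s| = |s| * q s
    rw [abs_mul, abs_of_nonneg (hq_nonneg s)]
  -- integrability of the call payoff
  have I1 : ∀ K : ℝ, Integrable (fun s => max (s - K) 0 * q s) := by
    intro K
    refine (habs.add (hq_int.const_mul |K|)).mono
      ((((measurable_id.sub_const K).max measurable_const).mul hq_meas).aestronglyMeasurable)
      (Filter.Eventually.of_forall fun s => ?_)
    have h1 : max (s - K) 0 ≤ |s| + |K| := by
      rcases le_total (s - K) 0 with h | h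
      · rw [max_eq_right h]; positivity
      · rw [max_eq_left h]
        calc s - K ≤ |s - K| := le_abs_self _
          _ ≤ |s| + |K| := abs_sub _ _
    simp only [Pi.add_apply, Real.norm_eq_abs]
    rw [abs_of_nonneg (mul_nonneg (le_max_right (s - K) 0) (hq_nonneg s)),
      abs_of_nonneg (add_nonneg (mul_nonneg (abs_nonneg s) (hq_nonneg s)) (mul_nonneg (abs_nonneg K) (hq_nonneg s)))]
    nlinarith [mul_le_mul_of_nonneg_right h1 (hq_nonneg s), hq_nonneg s]
  have Ipsi : ∀ K : ℝ, Integrable (fun s => ctvPsi s₀ s K * q s) := by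
    intro K
    have I2 : Integrable (fun s => max (s₀ - K) 0 * q s) := hq_int.const_mul _
    have I3 : Integrable (fun s => (if K < s₀ then s - s₀ else 0) * q s) := by
      by_cases hK : K < s₀
      · simpa [hK] using hsub
      · simp [hK]
    have heq : (fun s => ctvPsi s₀ s K * q s) = fun s =>
        max (s - K) 0 * q s - max (s₀ - K) 0 * q s - (if K < s₀ then s - s₀ else 0) * q s := by
      funext s; unfold ctvPsi; ring
    rw [heq]
    exact ((I1 K).sub I2).sub I3
  -- z K as an integral against ψ
  have hzpsi : ∀ K : ℝ, z K = ∫ s, ctvPsi s₀ s K * q s := by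
    intro K
    have I2 : Integrable (fun s => max (s₀ - K) 0 * q s) := hq_int.const_mul _
    have I3 : Integrable (fun s => (if K < s₀ then s - s₀ else 0) * q s) := by
      by_cases hK : K < s₀
      · simpa [hK] using hsub
      · simp [hK]
    have heq : (fun s => ctvPsi s₀ s K * q s) = fun s =>
        (max (s - K) 0 * q s - max (s₀ - K) 0 * q s) - (if K < s₀ then s - s₀ else 0) * q s := by
      funext s; unfold ctvPsi; ring
    have h3 : (∫ s, (if K < s₀ then s - s₀ else 0) * q s) = 0 := by
      by_cases hK : K < s₀
      · simpa [hK] using hmean0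
      · simp [hK]
    have e1 : (∫ s, (max (s - K) 0 * q s - max (s₀ - K) 0 * q s)
          - (if K < s₀ then s - s₀ else 0) * q s)
        = (∫ s, max (s - K) 0 * q s - max (s₀ - K) 0 * q s)
          - ∫ s, (if K < s₀ then s - s₀ else 0) * q s :=
      integral_sub ((I1 K).sub I2) I3
    have e2 : (∫ s, max (s - K) 0 * q s - max (s₀ - K) 0 * q s)
        = (∫ s, max (s - K) 0 * q s) - ∫ s, max (s₀ - K) 0 * q s := integral_sub (I1 K) I2
    rw [heq, e1, e2, integral_const_mul, hq_prob, hz K, h3]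
    ring
  -- the double integrand
  set f : ℝ → ℝ → ℂ := fun s K => Complex.exp (c * K) * ((ctvPsi s₀ s K * q s : ℝ) : ℂ) with hf_def
  have hnorm : ∀ s K, ‖f s K‖ = ctvPsi s₀ s K * q s := by
    intro s K
    rw [hf_def]
    simp only [norm_mul, Complex.norm_exp, Complex.norm_real, Real.norm_eq_abs]
    have hre : (c * K).re = 0 := by
      rw [hc_def]
      simp [Complex.mul_re]
    rw [hre, Real.exp_zero, one_mul,
      abs_of_nonneg (ctvPsi_nonneg s₀ s K), abs_of_nonneg (hq_nonneg s)]
  -- measurability of the double integrand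
  have mpsi : Measurable (fun p : ℝ × ℝ => ctvPsi s₀ p.1 p.2) := by
    unfold ctvPsi
    refine (((measurable_fst.sub measurable_snd).max measurable_const).sub
      ((measurable_const.sub measurable_snd).max measurable_const)).sub ?_
    exact Measurable.ite (measurableSet_lt measurable_snd measurable_const)
      (measurable_fst.sub measurable_const) measurable_const
  have hmeas_f : AEStronglyMeasurable (fun p : ℝ × ℝ => f p.1 p.2)
      ((volume : Measure ℝ).prod volume) := by
    apply Measurable.aestronglyMeasurable
    apply Measurable.mul
    · exact Complex.measurable_exp.comp (measurable_const.mul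
        (Complex.measurable_ofReal.comp measurable_snd))
    · exact Complex.measurable_ofReal.comp (mpsi.mul (hq_meas.comp measurable_fst))
  -- slice integrability in K
  have hslice : ∀ s : ℝ, Integrable (fun K => f s K) := by
    intro s
    rcases le_or_gt s₀ s with h | h
    · have heq : (fun K => f s K) = Set.indicator (Set.Ico s₀ s)
          (fun K : ℝ => Complex.exp (c * K) * (((s - K) * q s : ℝ) : ℂ)) := by
        funext K
        rw [hf_def]
        simp only [ctvPsi_eq, if_pos h]
        by_cases hK : K ∈ Set.Ico s₀ s
        · simp [Set.indicator_of_mem hK]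
        · simp [Set.indicator_of_notMem hK]
      rw [heq]
      refine IntegrableOn.integrable_indicator ?_ measurableSet_Ico
      have hcont : Continuous (fun K : ℝ => Complex.exp (c * K) * (((s - K) * q s : ℝ) : ℂ)) :=
        (Complex.continuous_exp.comp (continuous_const.mul Complex.continuous_ofReal)).mul
          (Complex.continuous_ofReal.comp ((continuous_const.sub continuous_id).mul
            continuous_const))
      exact (hcont.integrableOn_Icc.mono_set Set.Ico_subset_Icc_self)
    · have heq : (fun K => f s K) = Set.indicator (Set.Ico s s₀)
          (fun K : ℝ => Complex.exp (c * K) * (((K - s) * q s : ℝ) : ℂ)) := by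
        funext K
        rw [hf_def]
        simp only [ctvPsi_eq, if_neg (not_le.2 h)]
        by_cases hK : K ∈ Set.Ico s s₀
        · simp [Set.indicator_of_mem hK]
        · simp [Set.indicator_of_notMem hK]
      rw [heq]
      refine IntegrableOn.integrable_indicator ?_ measurableSet_Ico
      have hcont : Continuous (fun K : ℝ => Complex.exp (c * K) * (((K - s) * q s : ℝ) : ℂ)) :=
        (Complex.continuous_exp.comp (continuous_const.mul Complex.continuous_ofReal)).mul
          (Complex.continuous_ofReal.comp ((continuous_id.sub continuous_const).mul
            continuous_const))
      exact (hcont.integrableOn_Icc.mono_set Set.Ico_subset_Icc_self)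
  -- integrability of the norm integral
  have hnormint : Integrable (fun s => ∫ K, ‖f s K‖) := by
    have heq : (fun s => ∫ K, ‖f s K‖) = fun s => (s - s₀) ^ 2 * q s / 2 := by
      funext s
      simp_rw [hnorm]
      rw [integral_mul_const, ctv_integral_psi_real]
      ring
    rw [heq]
    exact hvar.div_const 2
  -- product integrability
  have hF : Integrable (Function.uncurry f) ((volume : Measure ℝ).prod volume) := by
    rw [Function.uncurry_def]
    rw [integrable_prod_iff hmeas_f]
    exact ⟨Filter.Eventually.of_forall hslice, hnormint⟩
  -- main computation
  have hofreal : ∀ g : ℝ → ℝ, (∫ s, ((g s : ℝ) : ℂ)) = (((∫ s, g s) : ℝ) : ℂ) :=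
    fun g => integral_ofReal
  have h1 : ∀ K : ℝ, Complex.exp (c * K) * ((z K : ℝ) : ℂ) = ∫ s, f s K := by
    intro K
    rw [hzpsi K, ← hofreal, ← integral_const_mul]
  have h2 : ∀ s : ℝ, (∫ K, f s K) = ((q s : ℝ) : ℂ) *
      (Complex.exp (c * s) / c ^ 2 - Complex.exp (c * s₀) * (((s : ℂ) - s₀) / c + 1 / c ^ 2)) := by
    intro s
    have heq : (fun K => f s K) = fun K : ℝ => ((q s : ℝ) : ℂ) *
        (Complex.exp (c * (K : ℂ)) * ((ctvPsi s₀ s K : ℝ) : ℂ)) := by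
      funext K
      rw [hf_def]
      push_cast
      ring
    rw [heq, integral_const_mul, ctv_integral_psi c hc]
  calc ∫ K : ℝ, Complex.exp (c * K) * ((z K : ℝ) : ℂ)
      = ∫ K : ℝ, ∫ s, f s K := by simp_rw [h1]
    _ = ∫ s : ℝ, ∫ K, f s K := (integral_integral_swap hF).symm
    _ = ∫ s : ℝ, ((q s : ℝ) : ℂ) *
          (Complex.exp (c * s) / c ^ 2 - Complex.exp (c * s₀) * (((s : ℂ) - s₀) / c + 1 / c ^ 2)) := by
        simp_rw [h2]
    _ = Complex.exp (c * s₀) * (1 - Ψ v) / (v : ℂ) ^ 2 := by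
        have IA : Integrable (fun s : ℝ => Complex.exp (c * s) * ((q s : ℝ) : ℂ)) := by
          refine Integrable.bdd_mul (c := 1) hq_int.ofReal ?_ (Filter.Eventually.of_forall fun s => ?_)
          · exact (Complex.measurable_exp.comp
              (measurable_const.mul Complex.measurable_ofReal)).aestronglyMeasurable
          · simp only [Complex.norm_exp]
            have hre : (c * s).re = 0 := by rw [hc_def]; simp [Complex.mul_re]
            rw [hre, Real.exp_zero]
        have IB : Integrable (fun s : ℝ => (((s - s₀) * q s : ℝ) : ℂ)) := hsub.ofReal
        have IC : Integrable (fun s : ℝ => ((q s : ℝ) : ℂ)) := hq_int.ofReal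
        have heq : (fun s : ℝ => ((q s : ℝ) : ℂ) *
            (Complex.exp (c * s) / c ^ 2 - Complex.exp (c * s₀) * (((s : ℂ) - s₀) / c + 1 / c ^ 2)))
            = fun s : ℝ => (1 / c ^ 2) * (Complex.exp (c * s) * ((q s : ℝ) : ℂ))
              - ((Complex.exp (c * s₀) / c) * (((s - s₀) * q s : ℝ) : ℂ)
                + (Complex.exp (c * s₀) / c ^ 2) * ((q s : ℝ) : ℂ)) := by
          funext s
          push_cast
          field_simp
        have e1 : (∫ s : ℝ, (1 / c ^ 2) * (Complex.exp (c * s) * ((q s : ℝ) : ℂ))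
              - ((Complex.exp (c * s₀) / c) * (((s - s₀) * q s : ℝ) : ℂ)
                + (Complex.exp (c * s₀) / c ^ 2) * ((q s : ℝ) : ℂ)))
            = (∫ s : ℝ, (1 / c ^ 2) * (Complex.exp (c * s) * ((q s : ℝ) : ℂ)))
              - ∫ s : ℝ, ((Complex.exp (c * s₀) / c) * (((s - s₀) * q s : ℝ) : ℂ)
                + (Complex.exp (c * s₀) / c ^ 2) * ((q s : ℝ) : ℂ)) :=
          integral_sub (IA.const_mul _) ((IB.const_mul _).add (IC.const_mul _))
        have e2 : (∫ s : ℝ, ((Complex.exp (c * s₀) / c) * (((s - s₀) * q s : ℝ) : ℂ)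
                + (Complex.exp (c * s₀) / c ^ 2) * ((q s : ℝ) : ℂ)))
            = (∫ s : ℝ, (Complex.exp (c * s₀) / c) * (((s - s₀) * q s : ℝ) : ℂ))
              + ∫ s : ℝ, (Complex.exp (c * s₀) / c ^ 2) * ((q s : ℝ) : ℂ) :=
          integral_add (IB.const_mul _) (IC.const_mul _)
        rw [heq, e1, e2, integral_const_mul, integral_const_mul,
          integral_const_mul, hofreal,
          hofreal, hmean0, hq_prob]
        have hA : (∫ s : ℝ, Complex.exp (c * s) * ((q s : ℝ) : ℂ))
            = Complex.exp (c * s₀) * Ψ v := by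
          have hPsi := hΨ v
          have heq2 : (fun s : ℝ => Complex.exp (Complex.I * (v : ℂ) * ((s : ℂ) - s₀)) * ((q s : ℝ) : ℂ))
              = fun s : ℝ => Complex.exp (-(c * s₀)) * (Complex.exp (c * s) * ((q s : ℝ) : ℂ)) := by
            funext s
            rw [← mul_assoc, ← Complex.exp_add, hc_def]
            ring_nf
          rw [heq2, integral_const_mul] at hPsi
          rw [hPsi, ← mul_assoc, ← Complex.exp_add]
          simp
        rw [hA]
        rw [hc2]
        push_cast
        field_simp
        ring
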